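/- Let G be a group and F ⊆ G' two families of subgroups of G. Suppose that every subgroup H ∈ G' is amenable relative to the family F|_H = {L ∩ H : L ∈ F} (i.e. the H-set ⨿_{L∈F|_H} H/L admits an H-invariant mean). Then for every normed ℝG-module W and every n ≥ 0, the restriction map given by precomposition with the inclusion of G-sets (G/F)^{n+1} ⊆ (G/G')^{n+1} — a cochain map from the complex of bounded G-equivariant W^#-valued cochains on (G/G')^{•+1} to that on (G/F)^{•+1} — induces an isomorphism on cohomology H^n_{G',b}(G;W^#) → H^n_{F,b}(G;W^#). -/

import Mathlib

open scoped BigOperators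

universe u v w

namespace RelBdd

variable {G : Type u} [Group G]

/-- `F` is a family of subgroups of `G`: nonempty, closed under conjugation and
closed under taking subgroups. -/
def IsFamily (F : Set (Subgroup G)) : Prop :=
  F.Nonempty ∧
    (∀ H ∈ F, ∀ g : G, Subgroup.map ((MulAut.conj g).toMonoidHom) H ∈ F) ∧
    ∀ H ∈ F, ∀ K : Subgroup G, K ≤ H → K ∈ F

/-- The `G`-set `G/F = ⨿_{H ∈ F} G/H`. -/
abbrev Cos (G : Type u) [Group G] (F : Set (Subgroup G)) : Type u :=
  Σ H : F, G ⧸ (H : Subgroup G)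

instance (F : Set (Subgroup G)) : SMul G (Cos G F) :=
  ⟨fun g x => ⟨x.1, g • x.2⟩⟩

instance (F : Set (Subgroup G)) : MulAction G (Cos G F) where
  one_smul := by
    rintro ⟨H, q⟩
    show (⟨H, (1 : G) • q⟩ : Cos G F) = ⟨H, q⟩
    rw [one_smul]
  mul_smul g h := by
    rintro ⟨H, q⟩
    show (⟨H, (g * h) • q⟩ : Cos G F) = ⟨H, g • h • q⟩
    rw [mul_smul]

/-- A function into a normed space is bounded. -/
def Bdd {α : Type*} {V : Type*} [Norm V] (f : α → V) : Prop :=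
  ∃ C : ℝ, ∀ x, ‖f x‖ ≤ C

/-- The simplicial coboundary operator on `V`-valued cochains on a set `S`. -/
def delta {S : Type*} {V : Type*} [AddCommGroup V] [Module ℝ V] (n : ℕ)
    (f : (Fin (n + 1) → S) → V) : (Fin (n + 2) → S) → V :=
  fun x => ∑ i : Fin (n + 2), ((-1 : ℝ) ^ (i : ℕ)) • f (fun j => x (i.succAbove j))

/-- `ℓ∞(S)`: the space of bounded real valued functions on `S`. -/
def Linf (S : Type v) : Submodule ℝ (S → ℝ) where
  carrier := {f | ∃ C : ℝ, ∀ s, |f s| ≤ C}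
  add_mem' := by
    rintro f g ⟨C, hC⟩ ⟨D, hD⟩
    exact ⟨C + D, fun s => (abs_add_le _ _).trans (add_le_add (hC s) (hD s))⟩
  zero_mem' := ⟨0, fun s => by simp⟩
  smul_mem' := by
    rintro r f ⟨C, hC⟩
    refine ⟨|r| * C, fun s => ?_⟩
    show |r * f s| ≤ |r| * C
    rw [abs_mul]
    exact mul_le_mul_of_nonneg_left (hC s) (abs_nonneg r)

/-- The constant function `r` as an element of `ℓ∞(S)`. -/
def constLinf (S : Type v) (r : ℝ) : Linf S :=
  ⟨fun _ => r, ⟨|r|, fun _ => le_rfl⟩⟩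

/-- Precomposition with a map `φ : S → S` as a linear endomorphism of `ℓ∞(S)`. -/
def compL {S : Type v} (φ : S → S) : Linf S →ₗ[ℝ] Linf S where
  toFun f := ⟨fun s => (f : S → ℝ) (φ s), by
    obtain ⟨C, hC⟩ := f.2
    exact ⟨C, fun s => hC (φ s)⟩⟩
  map_add' f g := by ext s; rfl
  map_smul' r f := by ext s; rfl

/-- There exists a `K`-invariant mean on the `K`-set `S`. -/
def InvariantMean (K : Type u) (S : Type v) [Group K] [MulAction K S] : Prop :=
  ∃ m : Linf S →ₗ[ℝ] ℝ,
    m (constLinf S 1) = 1 ∧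
    (∀ f : Linf S, (∀ s, 0 ≤ (f : S → ℝ) s) → 0 ≤ m f) ∧
    ∀ (g : K) (f : Linf S), m (compL (fun s => g⁻¹ • s) f) = m f

/-- The restriction `F|_H = {L ∩ H : L ∈ F}` of a collection of subgroups of `G` to
a collection of subgroups of `H`. -/
def restrictedFamily (F : Set (Subgroup G)) (H : Subgroup G) : Set (Subgroup H) :=
  {K | ∃ L ∈ F, K = L.subgroupOf H}

/-- `K` is amenable relative to the collection `𝒦` of its subgroups: the `K`-set
`⨿_{L ∈ 𝒦} K/L` admits a `K`-invariant mean. -/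
def RelativelyAmenable (K : Type u) [Group K] (𝒦 : Set (Subgroup K)) : Prop :=
  InvariantMean K (Cos K 𝒦)

/-- The family generated by a set `ℋ` of subgroups: all subgroups of conjugates of
members of `ℋ`, together with the trivial subgroup. -/
def famGen (ℋ : Set (Subgroup G)) : Set (Subgroup G) :=
  {K | K = ⊥ ∨ ∃ H ∈ ℋ, ∃ g : G, ∀ x ∈ K, g⁻¹ * x * g ∈ H}

/-- The left multiplication action of `g ∈ G` on a normed `ℝG`-module `W`, as a
continuous linear map. -/
def smulCLM {W : Type w} [NormedAddCommGroup W] [NormedSpace ℝ W] [DistribMulAction G W]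
    [SMulCommClass G ℝ W] (hW : ∀ (g : G) (w : W), ‖g • w‖ = ‖w‖) (g : G) : W →L[ℝ] W :=
  LinearMap.mkContinuous
    { toFun := fun w => g • w
      map_add' := fun a b => smul_add g a b
      map_smul' := fun r w => smul_comm g r w }
    1 (fun w => by simp [hW])

/-- The inclusion of `G`-sets `G/F ⊆ G/G'` for families `F ⊆ G'`. -/
def inclCos {G : Type u} [Group G] {F F' : Set (Subgroup G)} (h : F ⊆ F') :
    Cos G F → Cos G F' :=
  fun x => ⟨⟨(x.1 : Subgroup G), h x.1.2⟩, x.2⟩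


/-! ### Auxiliary machinery -/

section FinVal

lemma succAbove_val {n : ℕ} (i : Fin (n + 1)) (l : Fin n) :
    ((i.succAbove l : Fin (n + 1)) : ℕ) = if (l : ℕ) < (i : ℕ) then (l : ℕ) else (l : ℕ) + 1 := by
  rcases lt_or_ge (l : ℕ) (i : ℕ) with h | h
  · rw [Fin.succAbove, if_pos (by simpa [Fin.lt_def] using h), if_pos h, Fin.coe_castSucc]
  · rw [Fin.succAbove, if_neg (by simp [Fin.lt_def]; omega), if_neg (by omega), Fin.val_succ]

lemma predAbove_val {n : ℕ} (k : Fin n) (l : Fin (n + 1)) :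
    ((k.predAbove l : Fin n) : ℕ) = if (k : ℕ) < (l : ℕ) then (l : ℕ) - 1 else (l : ℕ) := by
  rcases lt_or_ge (k : ℕ) (l : ℕ) with h | h
  · rw [Fin.predAbove, dif_pos (by simpa [Fin.lt_def] using h), if_pos h, Fin.coe_pred]
  · rw [Fin.predAbove, dif_neg (by simp [Fin.lt_def]; omega), if_neg (by omega),
      Fin.coe_castPred]

end FinVal

section MeanTheory

variable {P : Type*} {A : Type*}

/-- A real-valued function is bounded. -/
def Bddf {A : Type*} (f : A → ℝ) : Prop := ∃ C : ℝ, ∀ a, |f a| ≤ C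

/-- A family of "means" on `ℓ∞(A)` indexed by points of `P`. -/
structure MeanOn (μ : P → (A → ℝ) → ℝ) : Prop where
  const : ∀ p (r : ℝ), μ p (fun _ => r) = r
  add : ∀ p (f g : A → ℝ), Bddf f → Bddf g →
    μ p (fun a => f a + g a) = μ p f + μ p g
  smul : ∀ p (r : ℝ) (f : A → ℝ), Bddf f → μ p (fun a => r * f a) = r * μ p f
  bound : ∀ p (f : A → ℝ) (C : ℝ), (∀ a, |f a| ≤ C) → |μ p f| ≤ C

/-- Iterated mean over all coordinates, outermost integral first. -/
def Mint (μ : P → (A → ℝ) → ℝ) : ∀ {b : ℕ}, (Fin b → P) → ((Fin b → A) → ℝ) → ℝ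
  | 0, _, F => F Fin.elim0
  | _ + 1, p, F => μ (p 0) fun σ => Mint μ (Fin.tail p) fun y => F (Fin.cons σ y)

variable {μ : P → (A → ℝ) → ℝ}

lemma Mint_succ {b : ℕ} (p : Fin (b + 1) → P) (F : (Fin (b + 1) → A) → ℝ) :
    Mint μ p F = μ (p 0) fun σ => Mint μ (Fin.tail p) fun y => F (Fin.cons σ y) := rfl

lemma Mint_bound (hμ : MeanOn μ) :
    ∀ {b : ℕ} (p : Fin b → P) (F : (Fin b → A) → ℝ) (C : ℝ),
      (∀ y, |F y| ≤ C) → |Mint μ p F| ≤ C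
  | 0, _, _, _, h => h _
  | _ + 1, _, _, _, h => hμ.bound _ _ _ fun _ => Mint_bound hμ _ _ _ fun _ => h _

lemma Mint_const (hμ : MeanOn μ) : ∀ {b : ℕ} (p : Fin b → P) (r : ℝ),
    Mint μ p (fun _ => r) = r
  | 0, _, _ => rfl
  | b + 1, p, r => by
    rw [Mint_succ]
    simp only [Mint_const hμ (Fin.tail p) r]
    exact hμ.const _ r

lemma Mint_add (hμ : MeanOn μ) : ∀ {b : ℕ} (p : Fin b → P) (F G : (Fin b → A) → ℝ)
    (CF CG : ℝ), (∀ y, |F y| ≤ CF) → (∀ y, |G y| ≤ CG) →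
    Mint μ p (fun y => F y + G y) = Mint μ p F + Mint μ p G
  | 0, _, _, _, _, _, _, _ => rfl
  | b + 1, p, F, G, CF, CG, hF, hG => by
    rw [Mint_succ]
    have h1 : ∀ σ : A, (Mint μ (Fin.tail p) fun y => F (Fin.cons σ y) + G (Fin.cons σ y))
        = (Mint μ (Fin.tail p) fun y => F (Fin.cons σ y))
          + Mint μ (Fin.tail p) fun y => G (Fin.cons σ y) := fun σ =>
      Mint_add hμ _ _ _ CF CG (fun y => hF _) (fun y => hG _)
    simp only [h1]
    exact hμ.add _ _ _ ⟨CF, fun σ => Mint_bound hμ _ _ _ fun y => hF _⟩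
      ⟨CG, fun σ => Mint_bound hμ _ _ _ fun y => hG _⟩

lemma Mint_smul (hμ : MeanOn μ) : ∀ {b : ℕ} (p : Fin b → P) (r : ℝ)
    (F : (Fin b → A) → ℝ) (CF : ℝ), (∀ y, |F y| ≤ CF) →
    Mint μ p (fun y => r * F y) = r * Mint μ p F
  | 0, _, _, _, _, _ => rfl
  | b + 1, p, r, F, CF, hF => by
    rw [Mint_succ]
    have h1 : ∀ σ : A, (Mint μ (Fin.tail p) fun y => r * F (Fin.cons σ y))
        = r * Mint μ (Fin.tail p) fun y => F (Fin.cons σ y) := fun σ =>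
      Mint_smul hμ _ _ _ CF fun y => hF _
    simp only [h1]
    exact hμ.smul _ _ _ ⟨CF, fun σ => Mint_bound hμ _ _ _ fun y => hF _⟩

lemma Mint_sum (hμ : MeanOn μ) {b : ℕ} (p : Fin b → P) {ι : Type*} (s : Finset ι)
    (F : ι → (Fin b → A) → ℝ) (C : ι → ℝ) (hC : ∀ i y, |F i y| ≤ C i) :
    Mint μ p (fun y => ∑ i ∈ s, F i y) = ∑ i ∈ s, Mint μ p (F i) := by
  classical
  induction s using Finset.induction with
  | empty => simpa using Mint_const hμ p 0
  | @insert a s ha ih =>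
    simp only [Finset.sum_insert ha]
    rw [Mint_add hμ p _ _ (C a) (∑ i ∈ s, C i) (fun y => hC a y)
      (fun y => (Finset.abs_sum_le_sum_abs _ _).trans
        (Finset.sum_le_sum fun i _ => hC i y)), ih]

lemma Mint_delete (hμ : MeanOn μ) : ∀ {b : ℕ} (p : Fin (b + 1) → P) (j : Fin (b + 1))
    (F : (Fin b → A) → ℝ),
    Mint μ p (fun y => F (fun l => y (j.succAbove l)))
      = Mint μ (fun l => p (j.succAbove l)) F
  | 0, p, j, F => by
    rw [Mint_succ]
    refine Eq.trans ?_ (hμ.const (p 0) (F Fin.elim0))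
    congr 1
    funext σ
    show F (fun l => (Fin.cons σ Fin.elim0 : Fin 1 → A) (j.succAbove l)) = F Fin.elim0
    exact congrArg F (funext fun l => l.elim0)
  | b + 1, p, j, F => by
    induction j using Fin.cases with
    | zero =>
      rw [Mint_succ]
      have h1 : ∀ (σ : A) (y : Fin (b + 1) → A),
          (fun l => (Fin.cons σ y : Fin (b+2) → A) ((0 : Fin (b+2)).succAbove l)) = y := by
        intro σ y; funext l
        rw [Fin.zero_succAbove, Fin.cons_succ]
      simp only [h1]
      have h2 : (fun l : Fin (b+1) => p ((0 : Fin (b+2)).succAbove l)) = Fin.tail p := by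
        funext l; rw [Fin.zero_succAbove]; rfl
      rw [h2]
      exact hμ.const _ _
    | succ j' =>
      rw [Mint_succ]
      have h1 : ∀ (σ : A) (y : Fin (b + 1) → A),
          (fun l => (Fin.cons σ y : Fin (b+2) → A) (j'.succ.succAbove l))
            = Fin.cons σ (fun l => y (j'.succAbove l)) := by
        intro σ y; funext l
        induction l using Fin.cases with
        | zero => rw [Fin.succ_succAbove_zero, Fin.cons_zero, Fin.cons_zero]
        | succ l' => rw [Fin.succ_succAbove_succ, Fin.cons_succ, Fin.cons_succ]
      simp only [h1]
      have h2 : ∀ σ : A, (Mint μ (Fin.tail p)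
          fun y => F (Fin.cons σ (fun l => y (j'.succAbove l))))
          = Mint μ (fun l => Fin.tail p (j'.succAbove l)) fun z => F (Fin.cons σ z) :=
        fun σ => Mint_delete hμ (Fin.tail p) j' (fun z => F (Fin.cons σ z))
      simp only [h2]
      have h3 : Mint μ (fun l => p (j'.succ.succAbove l)) F
          = μ (p 0) fun σ => Mint μ (Fin.tail fun l => p (j'.succ.succAbove l))
            fun z => F (Fin.cons σ z) := by
        rw [Mint_succ]
        congr 1
      rw [h3]
      congr 1
      funext σ
      congr 1
      funext l
      show p ((j'.succAbove l).succ) = p (j'.succ.succAbove l.succ)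
      rw [Fin.succ_succAbove_succ]

lemma Mint_smulpt {K : Type*} [SMul K P] [SMul K A]
    (heq : ∀ (g : K) (p : P) (f : A → ℝ), μ (g • p) f = μ p (fun a => f (g • a))) :
    ∀ {b : ℕ} (g : K) (p : Fin b → P) (F : (Fin b → A) → ℝ),
    Mint μ (fun i => g • p i) F = Mint μ p (fun y => F (fun i => g • y i))
  | 0, g, p, F => by
    rw [Mint, Mint]
    congr 1
    funext l; exact l.elim0
  | b + 1, g, p, F => by
    rw [Mint_succ, Mint_succ]
    show μ (g • p 0) _ = _
    rw [heq]
    congr 1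
    funext σ
    have h1 : Fin.tail (fun i => g • p i) = fun i => g • Fin.tail p i := rfl
    rw [h1, Mint_smulpt heq g (Fin.tail p) (fun y => F (Fin.cons (g • σ) y))]
    congr 1
    funext y
    congr 1
    funext i
    induction i using Fin.cases with
    | zero => rw [Fin.cons_zero, Fin.cons_zero]
    | succ l' => rw [Fin.cons_succ, Fin.cons_succ]

end MeanTheory

section Homotopy

variable {X : Type*} {μ : X → (X → ℝ) → ℝ}

/-- Take the first `k` coordinates from `x`, the remaining ones from `y`. -/
def mix {N : ℕ} (k : ℕ) (x y : Fin N → X) : Fin N → X :=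
  fun i => if (i : ℕ) < k then x i else y i

/-- Partial averaging: average the coordinates `k, …, N-1` of `F` using the means
at the corresponding points of `x`. -/
def Tav (μ : X → (X → ℝ) → ℝ) {N : ℕ} (k : ℕ) (F : (Fin N → X) → ℝ)
    (x : Fin N → X) : ℝ :=
  Mint μ x (fun y => F (mix k x y))

lemma mix_zero {N : ℕ} (x y : Fin N → X) : mix 0 x y = y :=
  funext fun i => if_neg (by omega)

lemma mix_top {N : ℕ} (k : ℕ) (hk : N ≤ k) (x y : Fin N → X) : mix k x y = x :=
  funext fun i => if_pos (lt_of_lt_of_le i.isLt hk)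

lemma Tav_zero {N : ℕ} (F : (Fin N → X) → ℝ) (x : Fin N → X) :
    Tav μ 0 F x = Mint μ x F := by
  unfold Tav; simp only [mix_zero]

lemma Tav_top (hμ : MeanOn μ) {N : ℕ} (k : ℕ) (hk : N ≤ k) (F : (Fin N → X) → ℝ)
    (x : Fin N → X) : Tav μ k F x = F x := by
  unfold Tav; simp only [mix_top k hk]; exact Mint_const hμ x (F x)

lemma Tav_bound (hμ : MeanOn μ) {N : ℕ} (k : ℕ) (F : (Fin N → X) → ℝ) (C : ℝ)
    (hC : ∀ y, |F y| ≤ C) (x : Fin N → X) : |Tav μ k F x| ≤ C :=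
  Mint_bound hμ x _ C fun y => hC _

lemma Tav_add (hμ : MeanOn μ) {N : ℕ} (k : ℕ) (F G : (Fin N → X) → ℝ) (CF CG : ℝ)
    (hF : ∀ y, |F y| ≤ CF) (hG : ∀ y, |G y| ≤ CG) (x : Fin N → X) :
    Tav μ k (fun z => F z + G z) x = Tav μ k F x + Tav μ k G x :=
  Mint_add hμ x _ _ CF CG (fun y => hF _) (fun y => hG _)

lemma Tav_smul (hμ : MeanOn μ) {N : ℕ} (k : ℕ) (r : ℝ) (F : (Fin N → X) → ℝ) (CF : ℝ)
    (hF : ∀ y, |F y| ≤ CF) (x : Fin N → X) :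
    Tav μ k (fun z => r * F z) x = r * Tav μ k F x :=
  Mint_smul hμ x r _ CF fun y => hF _

lemma Tav_sum (hμ : MeanOn μ) {N : ℕ} (k : ℕ) {ι : Type*} (s : Finset ι)
    (Fi : ι → (Fin N → X) → ℝ) (C : ι → ℝ) (hC : ∀ i y, |Fi i y| ≤ C i)
    (x : Fin N → X) :
    Tav μ k (fun z => ∑ i ∈ s, Fi i z) x = ∑ i ∈ s, Tav μ k (Fi i) x :=
  Mint_sum hμ x s (fun i y => Fi i (mix k x y)) C fun i y => hC i _

lemma mix_succAbove {N : ℕ} (k : ℕ) (i : Fin (N + 1)) (x y : Fin (N + 1) → X) :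
    (fun l => mix k x y (i.succAbove l))
      = mix (if (i : ℕ) < k then k - 1 else k) (fun l => x (i.succAbove l))
          (fun l => y (i.succAbove l)) := by
  funext l
  have hcond : (((i.succAbove l : Fin (N + 1)) : ℕ) < k)
      ↔ ((l : ℕ) < if (i : ℕ) < k then k - 1 else k) := by
    rw [succAbove_val]; split_ifs <;> omega
  show (if ((i.succAbove l : Fin (N + 1)) : ℕ) < k then x (i.succAbove l)
      else y (i.succAbove l)) = _
  rw [if_congr hcond rfl rfl]
  rfl

lemma Tav_delete (hμ : MeanOn μ) {N : ℕ} (k : ℕ) (i : Fin (N + 1))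
    (F : (Fin N → X) → ℝ) (x : Fin (N + 1) → X) :
    Tav μ k (fun z => F (fun l => z (i.succAbove l))) x
      = Tav μ (if (i : ℕ) < k then k - 1 else k) F (fun l => x (i.succAbove l)) := by
  unfold Tav
  have h1 : ∀ y : Fin (N + 1) → X, F (fun l => mix k x y (i.succAbove l))
      = (fun z => F (mix (if (i : ℕ) < k then k - 1 else k)
          (fun l => x (i.succAbove l)) z)) (fun l => y (i.succAbove l)) := by
    intro y
    rw [mix_succAbove]
  simp only [h1]
  exact Mint_delete hμ x i (fun z => F (mix (if (i : ℕ) < k then k - 1 else k)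
    (fun l => x (i.succAbove l)) z))

/-- The homotopy operator. -/
def hcoch (μ : X → (X → ℝ) → ℝ) {M : ℕ} (f : (Fin (M + 1) → X) → ℝ) :
    (Fin M → X) → ℝ :=
  fun x => ∑ k : Fin M,
    ((-1 : ℝ) ^ (k : ℕ)) * Tav μ ((k : ℕ) + 1) f (fun l => x (k.predAbove l))

lemma diag1 {n : ℕ} (k : Fin n) (l : Fin n) :
    k.predAbove (k.castSucc.succAbove l) = l := by
  apply Fin.ext
  simp only [predAbove_val, succAbove_val, Fin.coe_castSucc]
  split_ifs <;> omega

lemma diag2 {n : ℕ} (k : Fin n) (l : Fin n) :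
    k.predAbove (k.succ.succAbove l) = l := by
  apply Fin.ext
  simp only [predAbove_val, succAbove_val, Fin.val_succ]
  split_ifs <;> omega

lemma key1 {m : ℕ} (k' : Fin (m + 1)) (i' : Fin (m + 2)) (h : (i' : ℕ) ≤ (k' : ℕ))
    (l : Fin (m + 2)) :
    k'.succ.predAbove (i'.castSucc.succAbove l) = i'.succAbove (k'.predAbove l) := by
  apply Fin.ext
  simp only [predAbove_val, succAbove_val, Fin.coe_castSucc, Fin.val_succ]
  split_ifs <;> omega

lemma key2 {m : ℕ} (k' : Fin (m + 1)) (i' : Fin (m + 2)) (h : (k' : ℕ) < (i' : ℕ))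
    (l : Fin (m + 2)) :
    k'.castSucc.predAbove (i'.succ.succAbove l) = i'.succAbove (k'.predAbove l) := by
  apply Fin.ext
  simp only [predAbove_val, succAbove_val, Fin.coe_castSucc, Fin.val_succ]
  split_ifs <;> omega

lemma neg_one_pow_mul_self (n : ℕ) (z : ℝ) : (-1 : ℝ) ^ n * ((-1 : ℝ) ^ n * z) = z := by
  rw [← mul_assoc, ← pow_add]
  rw [Even.neg_one_pow ⟨n, rfl⟩, one_mul]

/-- The `(k, i)` term appearing in `hcoch (delta F)`. -/
def gaux (μ : X → (X → ℝ) → ℝ) {m : ℕ} (F : (Fin (m + 2) → X) → ℝ)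
    (x : Fin (m + 2) → X) (k : Fin (m + 2)) (i : Fin (m + 3)) : ℝ :=
  (-1 : ℝ) ^ (k : ℕ) * ((-1 : ℝ) ^ (i : ℕ) *
    Tav μ (if (i : ℕ) < (k : ℕ) + 1 then (k : ℕ) + 1 - 1 else (k : ℕ) + 1) F
      (fun l => x (k.predAbove (i.succAbove l))))

/-- `gaux` with the two diagonal terms removed. -/
def gaux0 (μ : X → (X → ℝ) → ℝ) {m : ℕ} (F : (Fin (m + 2) → X) → ℝ)
    (x : Fin (m + 2) → X) (k : Fin (m + 2)) (i : Fin (m + 3)) : ℝ :=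
  if (i : ℕ) = (k : ℕ) ∨ (i : ℕ) = (k : ℕ) + 1 then 0 else gaux μ F x k i

/-- The `(i', k')` term appearing in `delta (hcoch F)`. -/
def saux (μ : X → (X → ℝ) → ℝ) {m : ℕ} (F : (Fin (m + 2) → X) → ℝ)
    (x : Fin (m + 2) → X) (i' : Fin (m + 2)) (k' : Fin (m + 1)) : ℝ :=
  (-1 : ℝ) ^ (i' : ℕ) * ((-1 : ℝ) ^ (k' : ℕ) *
    Tav μ ((k' : ℕ) + 1) F (fun l => x (i'.succAbove (k'.predAbove l))))

end Homotopy

section ScalarMain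

variable {X : Type*} {μ : X → (X → ℝ) → ℝ}

lemma hcoch_apply {M : ℕ} (f : (Fin (M + 1) → X) → ℝ) (x : Fin M → X) :
    hcoch μ f x = ∑ k : Fin M,
      ((-1 : ℝ) ^ (k : ℕ)) * Tav μ ((k : ℕ) + 1) f (fun l => x (k.predAbove l)) := rfl

lemma castSucc_ne_succ {n : ℕ} (k : Fin n) : k.castSucc ≠ k.succ := by
  intro h
  have := congrArg Fin.val h
  simp only [Fin.coe_castSucc, Fin.val_succ] at this
  omega

/-- Step A: expansion of `hcoch (delta F)`. -/
lemma stepA (hμ : MeanOn μ) {m : ℕ} (F : (Fin (m + 2) → X) → ℝ) (C : ℝ)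
    (hC : ∀ y, |F y| ≤ C) (x : Fin (m + 2) → X) :
    hcoch μ (delta (m + 1) F) x = ∑ k : Fin (m + 2), ∑ i : Fin (m + 3), gaux μ F x k i := by
  rw [hcoch_apply]
  refine Finset.sum_congr rfl fun k _ => ?_
  have e1 : Tav μ ((k : ℕ) + 1) (delta (m + 1) F) (fun l => x (k.predAbove l))
      = ∑ i : Fin (m + 3), Tav μ ((k : ℕ) + 1)
          (fun z => ((-1 : ℝ) ^ (i : ℕ)) * F (fun l => z (i.succAbove l)))
          (fun l => x (k.predAbove l)) := by
    rw [show (delta (m + 1) F)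
        = fun z => ∑ i : Fin (m + 3), ((-1 : ℝ) ^ (i : ℕ)) * F (fun l => z (i.succAbove l)) by
      funext z; simp only [delta, smul_eq_mul]]
    exact Tav_sum hμ _ _ _ (fun _ => C)
      (fun i y => by
        rw [abs_mul, abs_pow, abs_neg, abs_one, one_pow, one_mul]; exact hC _) _
  rw [e1]
  rw [Finset.mul_sum]
  refine Finset.sum_congr rfl fun i _ => ?_
  rw [Tav_smul hμ _ _ _ C (fun y => hC _)]
  rw [Tav_delete hμ ((k : ℕ) + 1) i F (fun l => x (k.predAbove l))]
  rfl

/-- diagonal values -/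
lemma gaux_diag1 (hμ : MeanOn μ) {m : ℕ} (F : (Fin (m + 2) → X) → ℝ)
    (x : Fin (m + 2) → X) (k : Fin (m + 2)) :
    gaux μ F x k k.castSucc = Tav μ (k : ℕ) F x := by
  unfold gaux
  simp only [Fin.coe_castSucc]
  rw [if_pos (by omega), Nat.add_sub_cancel]
  have hx : (fun l => x (k.predAbove (k.castSucc.succAbove l))) = x := by
    funext l; rw [diag1]
  rw [hx, neg_one_pow_mul_self]

lemma gaux_diag2 (hμ : MeanOn μ) {m : ℕ} (F : (Fin (m + 2) → X) → ℝ)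
    (x : Fin (m + 2) → X) (k : Fin (m + 2)) :
    gaux μ F x k k.succ = -Tav μ ((k : ℕ) + 1) F x := by
  unfold gaux
  simp only [Fin.val_succ]
  rw [if_neg (by omega)]
  have hx : (fun l => x (k.predAbove (k.succ.succAbove l))) = x := by
    funext l; rw [diag2]
  rw [hx, pow_succ, mul_assoc, neg_one_mul]
  exact neg_one_pow_mul_self _ _

/-- split off the two diagonal terms -/
lemma gaux_split (hμ : MeanOn μ) {m : ℕ} (F : (Fin (m + 2) → X) → ℝ)
    (x : Fin (m + 2) → X) (k : Fin (m + 2)) :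
    ∑ i : Fin (m + 3), gaux μ F x k i
      = (Tav μ (k : ℕ) F x - Tav μ ((k : ℕ) + 1) F x) + ∑ i : Fin (m + 3), gaux0 μ F x k i := by
  have hpt : ∀ i : Fin (m + 3), gaux μ F x k i
      = ((if i = k.castSucc then gaux μ F x k k.castSucc else 0)
        + (if i = k.succ then gaux μ F x k k.succ else 0)) + gaux0 μ F x k i := by
    intro i
    by_cases h1 : i = k.castSucc
    · subst h1
      rw [if_pos rfl, if_neg (castSucc_ne_succ k)]
      have h0 : gaux0 μ F x k k.castSucc = 0 := if_pos (Or.inl (Fin.coe_castSucc k))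
      rw [h0]; ring
    · by_cases h2 : i = k.succ
      · subst h2
        rw [if_neg h1, if_pos rfl]
        have h0 : gaux0 μ F x k k.succ = 0 := if_pos (Or.inr (Fin.val_succ k))
        rw [h0]; ring
      · rw [if_neg h1, if_neg h2]
        have h0 : gaux0 μ F x k i = gaux μ F x k i := by
          refine if_neg ?_
          rintro (hc | hc)
          · exact h1 (Fin.ext (by simp [hc, Fin.coe_castSucc]))
          · exact h2 (Fin.ext (by simp [hc, Fin.val_succ]))
        rw [h0]; ring
  rw [Finset.sum_congr rfl fun i _ => hpt i]
  rw [Finset.sum_add_distrib, Finset.sum_add_distrib]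
  rw [Finset.sum_ite_eq' Finset.univ k.castSucc (fun _ => gaux μ F x k k.castSucc)]
  rw [Finset.sum_ite_eq' Finset.univ k.succ (fun _ => gaux μ F x k k.succ)]
  rw [if_pos (Finset.mem_univ _), if_pos (Finset.mem_univ _)]
  rw [gaux_diag1 hμ, gaux_diag2 hμ]
  ring

/-- Step C: expansion of `delta (hcoch F)`. -/
lemma stepC {m : ℕ} (F : (Fin (m + 2) → X) → ℝ) (x : Fin (m + 2) → X) :
    delta m (hcoch μ F) x = ∑ i' : Fin (m + 2), ∑ k' : Fin (m + 1), saux μ F x i' k' := by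
  simp only [delta, hcoch, smul_eq_mul, Finset.mul_sum]
  rfl

/-- Step D: the off-diagonal cancellation. -/
lemma stepD (hμ : MeanOn μ) {m : ℕ} (F : (Fin (m + 2) → X) → ℝ) (x : Fin (m + 2) → X) :
    ∑ k : Fin (m + 2), ∑ i : Fin (m + 3), gaux0 μ F x k i
      = - ∑ i' : Fin (m + 2), ∑ k' : Fin (m + 1), saux μ F x i' k' := by
  classical
  rw [← Finset.sum_product', ← Finset.sum_product']
  rw [← Finset.sum_neg_distrib]
  set od : Fin (m + 2) × Fin (m + 3) → Prop :=
    fun p => ¬((p.2 : ℕ) = (p.1 : ℕ) ∨ (p.2 : ℕ) = (p.1 : ℕ) + 1) with hod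
  have h1 : ∑ p ∈ Finset.univ ×ˢ Finset.univ, gaux0 μ F x p.1 p.2
      = ∑ p ∈ (Finset.univ ×ˢ Finset.univ).filter od, gaux0 μ F x p.1 p.2 := by
    refine (Finset.sum_filter_of_ne fun p _ hne => ?_).symm
    by_contra hP
    exact hne (if_pos (by simpa [hod] using hP))
  rw [h1]
  have h2 : ∑ p ∈ (Finset.univ ×ˢ Finset.univ).filter od, gaux0 μ F x p.1 p.2
      = ∑ p ∈ (Finset.univ ×ˢ Finset.univ).filter od, gaux μ F x p.1 p.2 := by
    refine Finset.sum_congr rfl fun p hp => ?_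
    have := (Finset.mem_filter.mp hp).2
    exact if_neg (by simpa [hod] using this)
  rw [h2]
  refine (Finset.sum_bij
    (i := fun (q : Fin (m + 2) × Fin (m + 1)) _ =>
      if (q.1 : ℕ) ≤ (q.2 : ℕ) then (q.2.succ, q.1.castSucc) else (q.2.castSucc, q.1.succ))
    ?_ ?_ ?_ ?_).symm
  · -- maps into the filtered set
    rintro ⟨i', k'⟩ -
    dsimp only
    by_cases hq : (i' : ℕ) ≤ (k' : ℕ)
    · rw [if_pos hq]
      refine Finset.mem_filter.mpr ⟨Finset.mem_product.mpr ⟨Finset.mem_univ _, Finset.mem_univ _⟩, ?_⟩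
      simp only [hod, Fin.coe_castSucc, Fin.val_succ]
      omega
    · rw [if_neg hq]
      refine Finset.mem_filter.mpr ⟨Finset.mem_product.mpr ⟨Finset.mem_univ _, Finset.mem_univ _⟩, ?_⟩
      simp only [hod, Fin.coe_castSucc, Fin.val_succ]
      omega
  · -- injective
    rintro ⟨i₁, k₁⟩ hm1 ⟨i₂, k₂⟩ hm2 h
    dsimp only at h
    by_cases hq1 : (i₁ : ℕ) ≤ (k₁ : ℕ) <;> by_cases hq2 : (i₂ : ℕ) ≤ (k₂ : ℕ)
    all_goals first
      | rw [if_pos hq1, if_pos hq2] at h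
      | rw [if_pos hq1, if_neg hq2] at h
      | rw [if_neg hq1, if_pos hq2] at h
      | rw [if_neg hq1, if_neg hq2] at h
    all_goals
      simp only [Prod.mk.injEq, Fin.ext_iff, Fin.coe_castSucc, Fin.val_succ] at h ⊢
    all_goals
      omega
  · -- surjective
    rintro ⟨k, i⟩ hb
    have hod2 := (Finset.mem_filter.mp hb).2
    simp only [hod] at hod2
    have hk := k.isLt
    have hi := i.isLt
    rcases Nat.lt_or_ge (i : ℕ) (k : ℕ) with h | h
    · refine ⟨(⟨(i : ℕ), by omega⟩, ⟨(k : ℕ) - 1, by omega⟩), Finset.mem_univ _, ?_⟩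
      dsimp only
      split_ifs with hc
      · refine Prod.ext (Fin.ext ?_) (Fin.ext ?_) <;>
          simp only [Fin.val_succ, Fin.coe_castSucc] <;> omega
      · exact absurd (show (i : ℕ) ≤ (k : ℕ) - 1 by omega) hc
    · refine ⟨(⟨(i : ℕ) - 1, by omega⟩, ⟨(k : ℕ), by omega⟩), Finset.mem_univ _, ?_⟩
      dsimp only
      split_ifs with hc
      · exact absurd hc (show ¬ ((i : ℕ) - 1 ≤ (k : ℕ)) by omega)
      · refine Prod.ext (Fin.ext ?_) (Fin.ext ?_) <;>
          simp only [Fin.val_succ, Fin.coe_castSucc] <;> omega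
  · -- values
    rintro ⟨i', k'⟩ -
    dsimp only
    by_cases hq : (i' : ℕ) ≤ (k' : ℕ)
    · rw [if_pos hq]
      show -(saux μ F x i' k') = gaux μ F x k'.succ i'.castSucc
      unfold saux gaux
      simp only [Fin.coe_castSucc, Fin.val_succ]
      rw [if_pos (by omega), Nat.add_sub_cancel]
      have hx : (fun l => x (k'.succ.predAbove (i'.castSucc.succAbove l)))
          = fun l => x (i'.succAbove (k'.predAbove l)) := by
        funext l; rw [key1 k' i' hq]
      rw [hx, pow_succ]
      ring
    · rw [if_neg hq]
      show -(saux μ F x i' k') = gaux μ F x k'.castSucc i'.succ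
      unfold saux gaux
      simp only [Fin.coe_castSucc, Fin.val_succ]
      rw [if_neg (by omega)]
      have hx : (fun l => x (k'.castSucc.predAbove (i'.succ.succAbove l)))
          = fun l => x (i'.succAbove (k'.predAbove l)) := by
        funext l; rw [key2 k' i' (by omega)]
      rw [hx, pow_succ]
      ring

/-- The homotopy identity. -/
lemma scalar_main (hμ : MeanOn μ) {m : ℕ} (F : (Fin (m + 2) → X) → ℝ) (C : ℝ)
    (hC : ∀ y, |F y| ≤ C) (x : Fin (m + 2) → X) :
    Tav μ 0 F x = F x + delta m (hcoch μ F) x + hcoch μ (delta (m + 1) F) x := by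
  have e1 : hcoch μ (delta (m + 1) F) x
      = (Tav μ 0 F x - F x)
        + ∑ k : Fin (m + 2), ∑ i : Fin (m + 3), gaux0 μ F x k i := by
    rw [stepA hμ F C hC x]
    rw [Finset.sum_congr rfl fun k _ => gaux_split hμ F x k]
    rw [Finset.sum_add_distrib]
    congr 1
    rw [Fin.sum_univ_eq_sum_range (fun k => Tav μ k F x - Tav μ (k + 1) F x) (m + 2)]
    rw [Finset.sum_range_sub' (fun k => Tav μ k F x)]
    rw [Tav_top hμ (m + 2) (le_refl (m + 2)) F x]
  rw [e1, stepD hμ F x, ← stepC]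
  ring

end ScalarMain

section CLMLevel

variable {W : Type v} [NormedAddCommGroup W] [NormedSpace ℝ W]
variable {P : Type*} {A : Type*}

lemma eval_bound {N : ℕ} {f : (Fin N → A) → (W →L[ℝ] ℝ)} {C : ℝ}
    (hC : ∀ y, ‖f y‖ ≤ C) (w : W) : ∀ y, |f y w| ≤ C * ‖w‖ := fun y => by
  rw [← Real.norm_eq_abs]
  exact ((f y).le_opNorm w).trans (mul_le_mul_of_nonneg_right (hC y) (norm_nonneg w))

lemma Mint_delta {μ : P → (A → ℝ) → ℝ} (hμ : MeanOn μ) {n : ℕ}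
    (f : (Fin (n + 1) → A) → ℝ) (C : ℝ) (hC : ∀ y, |f y| ≤ C) (p : Fin (n + 2) → P) :
    Mint μ p (fun y => delta n f y) = delta n (fun q => Mint μ q f) p := by
  have e1 : (fun y : Fin (n + 2) → A => delta n f y)
      = fun y => ∑ i : Fin (n + 2), ((-1 : ℝ) ^ (i : ℕ)) * f (fun j => y (i.succAbove j)) := by
    funext y; simp only [delta, smul_eq_mul]
  rw [e1, Mint_sum hμ p Finset.univ _ (fun _ => C) (fun i y => by
    rw [abs_mul, abs_pow, abs_neg, abs_one, one_pow, one_mul]; exact hC _)]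
  simp only [delta, smul_eq_mul]
  refine Finset.sum_congr rfl fun i _ => ?_
  rw [Mint_smul hμ p _ _ C (fun y => hC _)]
  congr 1
  exact Mint_delete hμ p i f

lemma Bdd_delta {S : Type*} {V : Type*} [NormedAddCommGroup V] [NormedSpace ℝ V] {n : ℕ}
    {f : (Fin (n + 1) → S) → V} (h : Bdd f) : Bdd (delta n f) := by
  obtain ⟨C, hC⟩ := h
  refine ⟨(n + 2) * C, fun x => ?_⟩
  calc ‖delta n f x‖ ≤ ∑ i : Fin (n + 2), ‖((-1 : ℝ) ^ (i : ℕ)) • f (fun j => x (i.succAbove j))‖ :=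
        norm_sum_le _ _
    _ ≤ ∑ _i : Fin (n + 2), C := Finset.sum_le_sum fun i _ => by
        rw [norm_smul, norm_pow, norm_neg, norm_one, one_pow, one_mul]; exact hC _
    _ = (n + 2) * C := by
        rw [Finset.sum_const, Finset.card_univ, Fintype.card_fin, nsmul_eq_mul]
        norm_num

lemma delta_apply_CLM {S : Type*} {n : ℕ} (f : (Fin (n + 1) → S) → (W →L[ℝ] ℝ))
    (x : Fin (n + 2) → S) (w : W) :
    delta n f x w = delta n (fun y => f y w) x := by
  simp only [delta, ContinuousLinearMap.coe_sum', Finset.sum_apply,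
    ContinuousLinearMap.coe_smul', Pi.smul_apply, smul_eq_mul]

lemma delta_sub_scalar {S : Type*} {n : ℕ} (f g : (Fin (n + 1) → S) → ℝ)
    (x : Fin (n + 2) → S) :
    delta n (fun y => f y - g y) x = delta n f x - delta n g x := by
  simp only [delta, smul_eq_mul, mul_sub, Finset.sum_sub_distrib]

open Classical in
noncomputable def AvgC (μ : P → (A → ℝ) → ℝ) (hμ : MeanOn μ) {N : ℕ}
    (f : (Fin N → A) → (W →L[ℝ] ℝ)) (p : Fin N → P) : W →L[ℝ] ℝ :=
  if h : Bdd f then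
    LinearMap.mkContinuousOfExistsBound
      { toFun := fun w => Mint μ p (fun y => f y w)
        map_add' := fun w w' => by
          show Mint μ p (fun y => f y (w + w'))
            = Mint μ p (fun y => f y w) + Mint μ p (fun y => f y w')
          rw [show (fun y : Fin N → A => f y (w + w')) = fun y => f y w + f y w'
            from funext fun y => map_add _ _ _]
          exact Mint_add hμ p _ _ (h.choose * ‖w‖) (h.choose * ‖w'‖)
            (eval_bound h.choose_spec w) (eval_bound h.choose_spec w')
        map_smul' := fun r w => by
          show Mint μ p (fun y => f y (r • w)) = r * Mint μ p (fun y => f y w)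
          rw [show (fun y : Fin N → A => f y (r • w)) = fun y => r * f y w
            from funext fun y => by rw [map_smul, smul_eq_mul]]
          exact Mint_smul hμ p r _ (h.choose * ‖w‖) (eval_bound h.choose_spec w) }
      ⟨h.choose, fun w => by
        rw [Real.norm_eq_abs]
        exact Mint_bound hμ p _ _ (eval_bound h.choose_spec w)⟩
  else 0

lemma AvgC_apply {μ : P → (A → ℝ) → ℝ} (hμ : MeanOn μ) {N : ℕ}
    {f : (Fin N → A) → (W →L[ℝ] ℝ)} (h : Bdd f) (p : Fin N → P) (w : W) :
    AvgC μ hμ f p w = Mint μ p (fun y => f y w) := by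
  rw [AvgC, dif_pos h]; rfl

lemma AvgC_norm {μ : P → (A → ℝ) → ℝ} (hμ : MeanOn μ) {N : ℕ}
    {f : (Fin N → A) → (W →L[ℝ] ℝ)} {C : ℝ} (h : Bdd f) (hC : ∀ y, ‖f y‖ ≤ C)
    (p : Fin N → P) : ‖AvgC μ hμ f p‖ ≤ max C 0 := by
  refine ContinuousLinearMap.opNorm_le_bound _ (le_max_right _ _) fun w => ?_
  rw [AvgC_apply hμ h, Real.norm_eq_abs]
  refine (Mint_bound hμ p _ (C * ‖w‖) (eval_bound hC w)).trans ?_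
  exact mul_le_mul_of_nonneg_right (le_max_left _ _) (norm_nonneg w)

lemma AvgC_bdd {μ : P → (A → ℝ) → ℝ} (hμ : MeanOn μ) {N : ℕ}
    {f : (Fin N → A) → (W →L[ℝ] ℝ)} (h : Bdd f) : Bdd (AvgC μ hμ f) :=
  ⟨max h.choose 0, fun p => AvgC_norm hμ h h.choose_spec p⟩

lemma AvgC_delta {μ : P → (A → ℝ) → ℝ} (hμ : MeanOn μ) {n : ℕ}
    (f : (Fin (n + 1) → A) → (W →L[ℝ] ℝ)) (hf : Bdd f) :
    delta n (AvgC μ hμ f) = AvgC μ hμ (delta n f) := by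
  funext p; ext w
  rw [delta_apply_CLM, AvgC_apply hμ (Bdd_delta hf)]
  have e1 : (fun q => AvgC μ hμ f q w) = fun q => Mint μ q (fun y => f y w) :=
    funext fun q => AvgC_apply hμ hf q w
  have e2 : (fun y : Fin (n + 2) → A => delta n f y w)
      = fun y => delta n (fun z => f z w) y :=
    funext fun y => delta_apply_CLM f y w
  rw [e1, e2, ← Mint_delta hμ (fun z => f z w) (hf.choose * ‖w‖)
    (eval_bound hf.choose_spec w) p]

open Classical in
noncomputable def TavC {X : Type*} (μ : X → (X → ℝ) → ℝ) (hμ : MeanOn μ) {N : ℕ} (k : ℕ)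
    (f : (Fin N → X) → (W →L[ℝ] ℝ)) (x : Fin N → X) : W →L[ℝ] ℝ :=
  if h : Bdd f then
    LinearMap.mkContinuousOfExistsBound
      { toFun := fun w => Tav μ k (fun y => f y w) x
        map_add' := fun w w' => by
          show Tav μ k (fun y => f y (w + w')) x
            = Tav μ k (fun y => f y w) x + Tav μ k (fun y => f y w') x
          rw [show (fun y : Fin N → X => f y (w + w')) = fun y => f y w + f y w'
            from funext fun y => map_add _ _ _]
          exact Tav_add hμ k _ _ (h.choose * ‖w‖) (h.choose * ‖w'‖)
            (eval_bound h.choose_spec w) (eval_bound h.choose_spec w') x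
        map_smul' := fun r w => by
          show Tav μ k (fun y => f y (r • w)) x = r * Tav μ k (fun y => f y w) x
          rw [show (fun y : Fin N → X => f y (r • w)) = fun y => r * f y w
            from funext fun y => by rw [map_smul, smul_eq_mul]]
          exact Tav_smul hμ k r _ (h.choose * ‖w‖) (eval_bound h.choose_spec w) x }
      ⟨h.choose, fun w => by
        rw [Real.norm_eq_abs]
        exact Tav_bound hμ k _ _ (eval_bound h.choose_spec w) x⟩
  else 0

lemma TavC_apply {X : Type*} {μ : X → (X → ℝ) → ℝ} (hμ : MeanOn μ) {N : ℕ} (k : ℕ)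
    {f : (Fin N → X) → (W →L[ℝ] ℝ)} (h : Bdd f) (x : Fin N → X) (w : W) :
    TavC μ hμ k f x w = Tav μ k (fun y => f y w) x := by
  rw [TavC, dif_pos h]; rfl

lemma TavC_norm {X : Type*} {μ : X → (X → ℝ) → ℝ} (hμ : MeanOn μ) {N : ℕ} (k : ℕ)
    {f : (Fin N → X) → (W →L[ℝ] ℝ)} {C : ℝ} (h : Bdd f) (hC : ∀ y, ‖f y‖ ≤ C)
    (x : Fin N → X) : ‖TavC μ hμ k f x‖ ≤ max C 0 := by
  refine ContinuousLinearMap.opNorm_le_bound _ (le_max_right _ _) fun w => ?_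
  rw [TavC_apply hμ k h, Real.norm_eq_abs]
  refine (Tav_bound hμ k _ (C * ‖w‖) (eval_bound hC w) x).trans ?_
  exact mul_le_mul_of_nonneg_right (le_max_left _ _) (norm_nonneg w)

/-- CLM-valued homotopy operator. -/
noncomputable def hcochC {X : Type*} (μ : X → (X → ℝ) → ℝ) (hμ : MeanOn μ) {M : ℕ}
    (f : (Fin (M + 1) → X) → (W →L[ℝ] ℝ)) : (Fin M → X) → (W →L[ℝ] ℝ) :=
  fun x => ∑ k : Fin M,
    ((-1 : ℝ) ^ (k : ℕ)) • TavC μ hμ ((k : ℕ) + 1) f (fun l => x (k.predAbove l))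

lemma hcochC_apply {X : Type*} {μ : X → (X → ℝ) → ℝ} (hμ : MeanOn μ) {M : ℕ}
    {f : (Fin (M + 1) → X) → (W →L[ℝ] ℝ)} (h : Bdd f) (x : Fin M → X) (w : W) :
    hcochC μ hμ f x w = hcoch μ (fun y => f y w) x := by
  simp only [hcochC, hcoch, ContinuousLinearMap.coe_sum', Finset.sum_apply,
    ContinuousLinearMap.coe_smul', Pi.smul_apply, smul_eq_mul]
  exact Finset.sum_congr rfl fun k _ => by rw [TavC_apply hμ _ h]

lemma hcochC_bdd {X : Type*} {μ : X → (X → ℝ) → ℝ} (hμ : MeanOn μ) {M : ℕ}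
    {f : (Fin (M + 1) → X) → (W →L[ℝ] ℝ)} (h : Bdd f) : Bdd (hcochC μ hμ f) := by
  refine ⟨M * max h.choose 0, fun x => ?_⟩
  calc ‖hcochC μ hμ f x‖
      ≤ ∑ k : Fin M, ‖((-1 : ℝ) ^ (k : ℕ)) • TavC μ hμ ((k : ℕ) + 1) f
          (fun l => x (k.predAbove l))‖ := norm_sum_le _ _
    _ ≤ ∑ _k : Fin M, max h.choose 0 := Finset.sum_le_sum fun k _ => by
        have hns := norm_smul ((-1 : ℝ) ^ (k : ℕ)) (TavC μ hμ ((k : ℕ) + 1) f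
          (fun l => x (k.predAbove l)))
        rw [hns, norm_pow, norm_neg, norm_one, one_pow, one_mul]
        exact TavC_norm hμ _ h h.choose_spec _
    _ = M * max h.choose 0 := by
        rw [Finset.sum_const, Finset.card_univ, Fintype.card_fin, nsmul_eq_mul]

/-- The CLM-valued homotopy identity. -/
lemma mainC {X : Type*} {μ : X → (X → ℝ) → ℝ} (hμ : MeanOn μ) {m : ℕ}
    (f : (Fin (m + 2) → X) → (W →L[ℝ] ℝ)) (hf : Bdd f) (x : Fin (m + 2) → X) :
    TavC μ hμ 0 f x = f x + delta m (hcochC μ hμ f) x + hcochC μ hμ (delta (m + 1) f) x := by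
  ext w
  rw [ContinuousLinearMap.add_apply, ContinuousLinearMap.add_apply, TavC_apply hμ 0 hf,
    delta_apply_CLM, hcochC_apply hμ (Bdd_delta hf)]
  have e1 : (fun q => hcochC μ hμ f q w) = fun q => hcoch μ (fun y => f y w) q :=
    funext fun q => hcochC_apply hμ hf q w
  have e2 : (fun y : Fin (m + 3) → X => delta (m + 1) f y w)
      = fun y => delta (m + 1) (fun z => f z w) y :=
    funext fun y => delta_apply_CLM f y w
  rw [e1, e2]
  exact scalar_main hμ (fun z => f z w) (hf.choose * ‖w‖) (eval_bound hf.choose_spec w) x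

lemma AvgC_zero {μ : P → (A → ℝ) → ℝ} (hμ : MeanOn μ) {N : ℕ} (p : Fin N → P) :
    AvgC μ hμ (0 : (Fin N → A) → (W →L[ℝ] ℝ)) p = 0 := by
  ext w
  rw [AvgC_apply hμ ⟨0, fun y => by simp⟩ p w]
  simp only [Pi.zero_apply, ContinuousLinearMap.zero_apply]
  exact Mint_const hμ p 0

lemma TavC_zero {X : Type*} {μ : X → (X → ℝ) → ℝ} (hμ : MeanOn μ) {N : ℕ} (k : ℕ)
    (x : Fin N → X) : TavC μ hμ k (0 : (Fin N → X) → (W →L[ℝ] ℝ)) x = 0 := by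
  ext w
  rw [TavC_apply hμ k ⟨0, fun y => by simp⟩ x w]
  simp only [Pi.zero_apply, ContinuousLinearMap.zero_apply]
  exact Mint_const hμ x 0

lemma hcochC_zero {X : Type*} {μ : X → (X → ℝ) → ℝ} (hμ : MeanOn μ) {M : ℕ}
    (x : Fin M → X) : hcochC μ hμ (0 : (Fin (M + 1) → X) → (W →L[ℝ] ℝ)) x = 0 := by
  unfold hcochC
  simp only [TavC_zero hμ, smul_zero, Finset.sum_const_zero]

end CLMLevel

section Equivariance

variable {G : Type u} [Group G] {W : Type v} [NormedAddCommGroup W] [NormedSpace ℝ W]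
  [DistribMulAction G W] [SMulCommClass G ℝ W]

lemma smulCLM_apply (hW : ∀ (g : G) (w : W), ‖g • w‖ = ‖w‖) (g : G) (w : W) :
    smulCLM hW g w = g • w := rfl

variable (hW : ∀ (g : G) (w : W), ‖g • w‖ = ‖w‖)

variable {P : Type*} {A : Type*} [SMul G P] [SMul G A]

lemma AvgC_equivariant_apply {μ : P → (A → ℝ) → ℝ} (hμ : MeanOn μ)
    (heq : ∀ (g : G) (p : P) (f : A → ℝ), μ (g • p) f = μ p (fun a => f (g • a)))
    {N : ℕ} {f : (Fin N → A) → (W →L[ℝ] ℝ)} (hf : Bdd f)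
    (hfe : ∀ (g : G) (y : Fin N → A), f (fun j => g • y j) = (f y).comp (smulCLM hW g⁻¹))
    (g : G) (p : Fin N → P) (w : W) :
    AvgC μ hμ f (fun j => g • p j) w = AvgC μ hμ f p (g⁻¹ • w) := by
  rw [AvgC_apply hμ hf, AvgC_apply hμ hf]
  rw [Mint_smulpt heq g p (fun y => f y w)]
  congr 1
  funext y
  show f (fun i => g • y i) w = f y (g⁻¹ • w)
  rw [hfe g y]
  rfl

lemma AvgC_equivariant {μ : P → (A → ℝ) → ℝ} (hμ : MeanOn μ)
    (heq : ∀ (g : G) (p : P) (f : A → ℝ), μ (g • p) f = μ p (fun a => f (g • a)))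
    {N : ℕ} {f : (Fin N → A) → (W →L[ℝ] ℝ)} (hf : Bdd f)
    (hfe : ∀ (g : G) (y : Fin N → A), f (fun j => g • y j) = (f y).comp (smulCLM hW g⁻¹))
    (g : G) (p : Fin N → P) :
    AvgC μ hμ f (fun j => g • p j) = (AvgC μ hμ f p).comp (smulCLM hW g⁻¹) := by
  ext w
  rw [ContinuousLinearMap.comp_apply, smulCLM_apply]
  exact AvgC_equivariant_apply hW hμ heq hf hfe g p w

variable {X : Type*} [SMul G X]

lemma mix_smul {N : ℕ} (k : ℕ) (g : G) (x y : Fin N → X) :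
    mix k (fun j => g • x j) (fun i => g • y i) = fun i => g • mix k x y i := by
  funext i; unfold mix; split_ifs <;> rfl

lemma TavC_equivariant_apply {μ : X → (X → ℝ) → ℝ} (hμ : MeanOn μ)
    (heq : ∀ (g : G) (p : X) (f : X → ℝ), μ (g • p) f = μ p (fun a => f (g • a)))
    {N : ℕ} (k : ℕ) {f : (Fin N → X) → (W →L[ℝ] ℝ)} (hf : Bdd f)
    (hfe : ∀ (g : G) (y : Fin N → X), f (fun j => g • y j) = (f y).comp (smulCLM hW g⁻¹))
    (g : G) (x : Fin N → X) (w : W) :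
    TavC μ hμ k f (fun j => g • x j) w = TavC μ hμ k f x (g⁻¹ • w) := by
  rw [TavC_apply hμ k hf, TavC_apply hμ k hf]
  show Mint μ (fun j => g • x j) (fun y => f (mix k (fun j => g • x j) y) w)
    = Tav μ k (fun y => f y (g⁻¹ • w)) x
  rw [Mint_smulpt heq g x (fun y => f (mix k (fun j => g • x j) y) w)]
  congr 1
  funext y
  show f (mix k (fun j => g • x j) (fun i => g • y i)) w = f (mix k x y) (g⁻¹ • w)
  rw [mix_smul, hfe g (mix k x y)]
  rfl

lemma hcochC_equivariant {μ : X → (X → ℝ) → ℝ} (hμ : MeanOn μ)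
    (heq : ∀ (g : G) (p : X) (f : X → ℝ), μ (g • p) f = μ p (fun a => f (g • a)))
    {M : ℕ} {f : (Fin (M + 1) → X) → (W →L[ℝ] ℝ)} (hf : Bdd f)
    (hfe : ∀ (g : G) (y : Fin (M + 1) → X),
      f (fun j => g • y j) = (f y).comp (smulCLM hW g⁻¹))
    (g : G) (x : Fin M → X) :
    hcochC μ hμ f (fun j => g • x j) = (hcochC μ hμ f x).comp (smulCLM hW g⁻¹) := by
  ext w
  rw [ContinuousLinearMap.comp_apply, smulCLM_apply]
  unfold hcochC
  rw [ContinuousLinearMap.sum_apply, ContinuousLinearMap.sum_apply]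
  refine Finset.sum_congr rfl fun k _ => ?_
  rw [ContinuousLinearMap.smul_apply, ContinuousLinearMap.smul_apply]
  congr 1
  exact TavC_equivariant_apply hW hμ heq ((k : ℕ) + 1) hf hfe g
    (fun l => x (k.predAbove l)) w

end Equivariance

section Construction

variable {G : Type u} [Group G]

/-- The canonical `H`-equivariant map `H/(F|_H) → G/F`. -/
noncomputable def jmap (F : Set (Subgroup G)) (H : Subgroup G) :
    Cos H (restrictedFamily F H) → Cos G F := fun x =>
  ⟨⟨x.1.2.choose, x.1.2.choose_spec.1⟩,
    Quotient.liftOn' x.2 (fun h => ((h : G) : G ⧸ x.1.2.choose))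
      (by
        intro a b hab
        rw [QuotientGroup.leftRel_apply] at hab
        apply QuotientGroup.eq.mpr
        have hK := x.1.2.choose_spec.2
        rw [hK] at hab
        have h2 := (Subgroup.mem_subgroupOf).mp hab
        simpa using h2)⟩

lemma jmap_smul (F : Set (Subgroup G)) (H : Subgroup G) (h : H)
    (x : Cos H (restrictedFamily F H)) :
    jmap F H (h • x) = (h : G) • jmap F H x := by
  obtain ⟨K, q⟩ := x
  induction q using Quotient.inductionOn' with
  | h a => rfl

variable (F F' : Set (Subgroup G))

open Classical in
noncomputable def meanS
    (hamen : ∀ H : Subgroup G, H ∈ F' → RelativelyAmenable H (restrictedFamily F H))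
    (H : Subgroup G) (hH : H ∈ F') (f : Cos G F → ℝ) : ℝ :=
  if hb : ∃ C : ℝ, ∀ σ, |f (jmap F H σ)| ≤ C then
    (hamen H hH).choose ⟨fun σ => f (jmap F H σ), hb⟩
  else 0

lemma mean_abs_le {S : Type w} (mm : Linf S →ₗ[ℝ] ℝ) (h1 : mm (constLinf S 1) = 1)
    (hpos : ∀ f : Linf S, (∀ s, 0 ≤ (f : S → ℝ) s) → 0 ≤ mm f) (f : Linf S) (C : ℝ)
    (hC : ∀ s, |(f : S → ℝ) s| ≤ C) : |mm f| ≤ C := by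
  have hconst : ∀ r : ℝ, mm (constLinf S r) = r := fun r => by
    have h : constLinf S r = r • constLinf S 1 := Subtype.ext (funext fun s => (mul_one r).symm)
    rw [h, map_smul, h1, smul_eq_mul, mul_one]
  have h2 : mm f ≤ C := by
    have h3 : 0 ≤ mm (constLinf S C - f) := hpos _ (fun s => by
      show 0 ≤ C - (f : S → ℝ) s
      have := abs_le.mp (hC s)
      linarith [this.2])
    rw [map_sub, hconst] at h3
    linarith
  have h4 : -C ≤ mm f := by
    have h3 : 0 ≤ mm (f + constLinf S C) := hpos _ (fun s => by
      show 0 ≤ (f : S → ℝ) s + C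
      have := abs_le.mp (hC s)
      linarith [this.1])
    rw [map_add, hconst] at h3
    linarith
  exact abs_le.mpr ⟨h4, h2⟩

variable (hamen : ∀ H : Subgroup G, H ∈ F' → RelativelyAmenable H (restrictedFamily F H))

lemma meanS_const (H : Subgroup G) (hH : H ∈ F') (r : ℝ) :
    meanS F F' hamen H hH (fun _ => r) = r := by
  rw [meanS, dif_pos ⟨|r|, fun σ => le_refl _⟩]
  have hspec := (hamen H hH).choose_spec
  have h1 : (⟨fun _ => r, ⟨|r|, fun σ => le_refl _⟩⟩ :
      Linf (Cos H (restrictedFamily F H))) = r • constLinf _ 1 :=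
    Subtype.ext (funext fun σ => (mul_one r).symm)
  rw [h1, map_smul, hspec.1, smul_eq_mul, mul_one]

lemma meanS_add (H : Subgroup G) (hH : H ∈ F') (f g : Cos G F → ℝ)
    (hf : Bddf f) (hg : Bddf g) :
    meanS F F' hamen H hH (fun s => f s + g s)
      = meanS F F' hamen H hH f + meanS F F' hamen H hH g := by
  obtain ⟨Cf, hCf⟩ := hf
  obtain ⟨Cg, hCg⟩ := hg
  rw [meanS, dif_pos ⟨Cf + Cg, fun σ => (abs_add_le _ _).trans (add_le_add (hCf _) (hCg _))⟩,
    meanS, dif_pos ⟨Cf, fun σ => hCf _⟩, meanS, dif_pos ⟨Cg, fun σ => hCg _⟩]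
  rw [← map_add]
  rfl

lemma meanS_smul (H : Subgroup G) (hH : H ∈ F') (r : ℝ) (f : Cos G F → ℝ)
    (hf : Bddf f) :
    meanS F F' hamen H hH (fun s => r * f s) = r * meanS F F' hamen H hH f := by
  obtain ⟨Cf, hCf⟩ := hf
  rw [meanS, dif_pos ⟨|r| * Cf, fun σ => by
      rw [abs_mul]; exact mul_le_mul_of_nonneg_left (hCf _) (abs_nonneg r)⟩,
    meanS, dif_pos ⟨Cf, fun σ => hCf _⟩]
  have hsm := map_smul (hamen H hH).choose r (⟨fun σ => f (jmap F H σ),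
    ⟨Cf, fun σ => hCf _⟩⟩ : Linf (Cos H (restrictedFamily F H)))
  rw [smul_eq_mul] at hsm
  exact hsm

lemma meanS_bound (H : Subgroup G) (hH : H ∈ F') (f : Cos G F → ℝ) (C : ℝ)
    (hC : ∀ s, |f s| ≤ C) : |meanS F F' hamen H hH f| ≤ C := by
  rw [meanS, dif_pos ⟨C, fun σ => hC _⟩]
  have hspec := (hamen H hH).choose_spec
  exact mean_abs_le _ hspec.1 hspec.2.1 _ C fun σ => hC _

lemma meanS_inv (H : Subgroup G) (hH : H ∈ F') (h : H) (f : Cos G F → ℝ) :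
    meanS F F' hamen H hH (fun s => f ((h : G) • s)) = meanS F F' hamen H hH f := by
  have hcomp : ∀ σ : Cos H (restrictedFamily F H),
      f ((h : G) • jmap F H σ) = f (jmap F H (h • σ)) := fun σ => by rw [jmap_smul]
  by_cases hb : ∃ C : ℝ, ∀ σ, |f (jmap F H σ)| ≤ C
  · obtain ⟨C, hC⟩ := hb
    have hb2 : ∃ C : ℝ, ∀ σ, |(fun s => f ((h : G) • s)) (jmap F H σ)| ≤ C :=
      ⟨C, fun σ => by simpa only [hcomp σ] using hC (h • σ)⟩
    rw [meanS, dif_pos hb2, meanS, dif_pos ⟨C, hC⟩]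
    have hspec := (hamen H hH).choose_spec
    have hinv := hspec.2.2 h⁻¹ ⟨fun σ => f (jmap F H σ), ⟨C, hC⟩⟩
    refine Eq.trans ?_ hinv
    congr 1
    apply Subtype.ext
    funext σ
    show f ((h : G) • jmap F H σ) = f (jmap F H (h⁻¹⁻¹ • σ))
    rw [inv_inv, hcomp σ]
  · have hb2 : ¬ ∃ C : ℝ, ∀ σ, |(fun s => f ((h : G) • s)) (jmap F H σ)| ≤ C := by
      rintro ⟨C, hC⟩
      refine hb ⟨C, fun σ => ?_⟩
      have h2 := hC (h⁻¹ • σ)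
      simp only at h2
      rw [hcomp (h⁻¹ • σ), smul_inv_smul] at h2
      exact h2
    rw [meanS, dif_neg hb2, meanS, dif_neg hb]

/-- The family of means on `ℓ∞(G/F)` indexed by points of `G/F'`. -/
noncomputable def muTS : Cos G F' → (Cos G F → ℝ) → ℝ := fun t f =>
  Quotient.liftOn' t.2
    (fun g => meanS F F' hamen t.1.1 t.1.2 (fun s => f (g • s)))
    (by
      intro a b hab
      rw [QuotientGroup.leftRel_apply] at hab
      rw [show (fun s : Cos G F => f (b • s))
          = fun s => f (a • (((⟨a⁻¹ * b, hab⟩ : t.1.1) : G) • s)) from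
        funext fun s => by rw [← mul_smul, mul_inv_cancel_left]]
      exact (meanS_inv F F' hamen t.1.1 t.1.2 ⟨a⁻¹ * b, hab⟩ (fun s => f (a • s))).symm)

lemma muTS_mk (H : Subgroup G) (hH : H ∈ F') (a : G) (f : Cos G F → ℝ) :
    muTS F F' hamen (⟨⟨H, hH⟩, QuotientGroup.mk a⟩ : Cos G F') f
      = meanS F F' hamen H hH (fun s => f (a • s)) := rfl

lemma muTS_mean : MeanOn (muTS F F' hamen) := by
  constructor
  · rintro ⟨⟨H, hH⟩, q⟩ r
    induction q using Quotient.inductionOn' with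
    | h a => exact meanS_const F F' hamen H hH r
  · rintro ⟨⟨H, hH⟩, q⟩ f g hf hg
    induction q using Quotient.inductionOn' with
    | h a =>
      obtain ⟨Cf, hCf⟩ := hf
      obtain ⟨Cg, hCg⟩ := hg
      exact meanS_add F F' hamen H hH (fun s => f (a • s)) (fun s => g (a • s))
        ⟨Cf, fun s => hCf _⟩ ⟨Cg, fun s => hCg _⟩
  · rintro ⟨⟨H, hH⟩, q⟩ r f hf
    induction q using Quotient.inductionOn' with
    | h a =>
      obtain ⟨Cf, hCf⟩ := hf
      exact meanS_smul F F' hamen H hH r (fun s => f (a • s)) ⟨Cf, fun s => hCf _⟩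
  · rintro ⟨⟨H, hH⟩, q⟩ f C hC
    induction q using Quotient.inductionOn' with
    | h a => exact meanS_bound F F' hamen H hH (fun s => f (a • s)) C fun s => hC _

lemma muTS_equivariant (g : G) (t : Cos G F') (f : Cos G F → ℝ) :
    muTS F F' hamen (g • t) f = muTS F F' hamen t (fun s => f (g • s)) := by
  obtain ⟨⟨H, hH⟩, q⟩ := t
  induction q using Quotient.inductionOn' with
  | h a =>
    show meanS F F' hamen H hH (fun s => f ((g * a) • s))
      = meanS F F' hamen H hH (fun s => f (g • a • s))
    congr 1
    funext s
    rw [mul_smul]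

variable (hFF' : F ⊆ F')

/-- Mean family on `ℓ∞(G/F')` (supported on `G/F`). -/
noncomputable def muT : Cos G F' → (Cos G F' → ℝ) → ℝ := fun t f =>
  muTS F F' hamen t (fun s => f (inclCos hFF' s))

/-- Mean family on `ℓ∞(G/F)` indexed by `G/F`. -/
noncomputable def muS : Cos G F → (Cos G F → ℝ) → ℝ := fun s f =>
  muTS F F' hamen (inclCos hFF' s) f

lemma muT_mean : MeanOn (muT F F' hamen hFF') := by
  have h := muTS_mean F F' hamen
  constructor
  · intro p r; exact h.const p r
  · intro p f g hf hg
    exact h.add p _ _ ⟨hf.choose, fun s => hf.choose_spec _⟩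
      ⟨hg.choose, fun s => hg.choose_spec _⟩
  · intro p r f hf
    exact h.smul p r _ ⟨hf.choose, fun s => hf.choose_spec _⟩
  · intro p f C hC
    exact h.bound p _ C fun s => hC _

lemma muS_mean : MeanOn (muS F F' hamen hFF') := by
  have h := muTS_mean F F' hamen
  constructor
  · intro p r; exact h.const _ r
  · intro p f g hf hg; exact h.add _ f g hf hg
  · intro p r f hf; exact h.smul _ r f hf
  · intro p f C hC; exact h.bound _ f C hC

lemma muT_equivariant (g : G) (t : Cos G F') (f : Cos G F' → ℝ) :
    muT F F' hamen hFF' (g • t) f = muT F F' hamen hFF' t (fun a => f (g • a)) :=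
  muTS_equivariant F F' hamen g t _

lemma muS_equivariant (g : G) (s : Cos G F) (f : Cos G F → ℝ) :
    muS F F' hamen hFF' (g • s) f = muS F F' hamen hFF' s (fun a => f (g • a)) :=
  muTS_equivariant F F' hamen g (inclCos hFF' s) f

lemma Mint_muT : ∀ {b : ℕ} (p : Fin b → Cos G F') (Fn : (Fin b → Cos G F') → ℝ),
    Mint (muT F F' hamen hFF') p Fn
      = Mint (muTS F F' hamen) p (fun y => Fn (fun i => inclCos hFF' (y i)))
  | 0, p, Fn => congrArg Fn (funext fun i => i.elim0)
  | b + 1, p, Fn => by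
    rw [Mint_succ, Mint_succ]
    show muTS F F' hamen (p 0)
        (fun σ => Mint (muT F F' hamen hFF') (Fin.tail p)
          (fun y => Fn (Fin.cons (inclCos hFF' σ) y))) = _
    congr 1
    funext σ
    rw [Mint_muT (Fin.tail p) (fun y => Fn (Fin.cons (inclCos hFF' σ) y))]
    congr 1
    funext y
    congr 1
    funext i
    induction i using Fin.cases with
    | zero => rw [Fin.cons_zero, Fin.cons_zero]
    | succ l => rw [Fin.cons_succ, Fin.cons_succ]

lemma Mint_muS : ∀ {b : ℕ} (p : Fin b → Cos G F) (Fn : (Fin b → Cos G F) → ℝ),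
    Mint (muS F F' hamen hFF') p Fn
      = Mint (muTS F F' hamen) (fun i => inclCos hFF' (p i)) Fn
  | 0, p, Fn => rfl
  | b + 1, p, Fn => by
    rw [Mint_succ, Mint_succ]
    congr 1
    funext σ
    exact Mint_muS (Fin.tail p) (fun y => Fn (Fin.cons σ y))

end Construction

section DegreeZero

lemma const_of_cocycle0 {S : Type w} {V : Type*} [AddCommGroup V] [Module ℝ V]
    (f : (Fin 1 → S) → V) (h : delta 0 f = 0) (x y : Fin 1 → S) : f x = f y := by
  have h1 := congrFun h (Fin.cons (y 0) x)
  simp only [delta, Pi.zero_apply] at h1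
  rw [Fin.sum_univ_two] at h1
  have e0 : (fun j : Fin 1 => (Fin.cons (y 0) x : Fin 2 → S) ((0 : Fin 2).succAbove j)) = x := by
    funext j
    have hj : j = 0 := Subsingleton.elim j 0
    subst hj
    show (Fin.cons (y 0) x : Fin 2 → S) ((0 : Fin 2).succAbove 0) = x 0
    rw [Fin.zero_succAbove, Fin.cons_succ]
  have e1 : (fun j : Fin 1 => (Fin.cons (y 0) x : Fin 2 → S) ((1 : Fin 2).succAbove j)) = y := by
    funext j
    have hj : j = 0 := Subsingleton.elim j 0
    subst hj
    show (Fin.cons (y 0) x : Fin 2 → S) ((1 : Fin 2).succAbove 0) = y 0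
    rw [show ((1 : Fin 2).succAbove 0) = 0 from by decide, Fin.cons_zero]
  rw [e0, e1] at h1
  simp only [Fin.val_zero, pow_zero, one_smul, Fin.val_one, pow_one, neg_one_smul] at h1
  exact add_neg_eq_zero.mp h1

end DegreeZero
/-- Theorem 4.8, (i) ⇒ (ii).  Let `F ⊆ G'` be two families of
subgroups of `G` such that every `H ∈ G'` is amenable relative to `F|_H`.  Then for
every normed `ℝG`-module `W` and every `n ≥ 0`, restriction along the inclusion
`(G/F)^{n+1} ⊆ (G/G')^{n+1}` induces an isomorphism
`H^n_{G',b}(G; W^#) → H^n_{F,b}(G; W^#)`: in degree `0` it is a bijection on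
cocycles, and in each degree `n ≥ 1` it is surjective and injective up to
coboundaries of bounded equivariant cochains. -/
theorem canonical_map_iso_of_relatively_amenable (G : Type u) [Group G]
    (F F' : Set (Subgroup G)) (hF : IsFamily F) (hF' : IsFamily F') (hFF' : F ⊆ F')
    (hamen : ∀ H : Subgroup G, H ∈ F' →
      RelativelyAmenable H (restrictedFamily F H))
    (W : Type v) [NormedAddCommGroup W] [NormedSpace ℝ W] [DistribMulAction G W]
    [SMulCommClass G ℝ W] (hW : ∀ (g : G) (w : W), ‖g • w‖ = ‖w‖) :
    -- degree 0: bijection on `0`-cocycles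
    ((∀ f : (Fin 1 → Cos G F) → (W →L[ℝ] ℝ),
        Bdd f →
        (∀ (g : G) (x : Fin 1 → Cos G F),
          f (fun j => g • x j) = (f x).comp (smulCLM hW g⁻¹)) →
        delta 0 f = 0 →
        ∃ c : (Fin 1 → Cos G F') → (W →L[ℝ] ℝ),
          Bdd c ∧
          (∀ (g : G) (x : Fin 1 → Cos G F'),
            c (fun j => g • x j) = (c x).comp (smulCLM hW g⁻¹)) ∧
          delta 0 c = 0 ∧
          ∀ x : Fin 1 → Cos G F, c (fun j => inclCos hFF' (x j)) = f x) ∧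
      ∀ c c' : (Fin 1 → Cos G F') → (W →L[ℝ] ℝ),
        Bdd c → (∀ (g : G) (x : Fin 1 → Cos G F'),
          c (fun j => g • x j) = (c x).comp (smulCLM hW g⁻¹)) → delta 0 c = 0 →
        Bdd c' → (∀ (g : G) (x : Fin 1 → Cos G F'),
          c' (fun j => g • x j) = (c' x).comp (smulCLM hW g⁻¹)) → delta 0 c' = 0 →
        (∀ x : Fin 1 → Cos G F,
          c (fun j => inclCos hFF' (x j)) = c' (fun j => inclCos hFF' (x j))) →
        c = c') ∧
    -- degrees `n ≥ 1`: surjectivity and injectivity up to coboundaries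
    ∀ m : ℕ,
      (∀ f : (Fin (m + 2) → Cos G F) → (W →L[ℝ] ℝ),
        Bdd f →
        (∀ (g : G) (x : Fin (m + 2) → Cos G F),
          f (fun j => g • x j) = (f x).comp (smulCLM hW g⁻¹)) →
        delta (m + 1) f = 0 →
        ∃ c : (Fin (m + 2) → Cos G F') → (W →L[ℝ] ℝ),
          Bdd c ∧
          (∀ (g : G) (x : Fin (m + 2) → Cos G F'),
            c (fun j => g • x j) = (c x).comp (smulCLM hW g⁻¹)) ∧
          delta (m + 1) c = 0 ∧
          ∃ b : (Fin (m + 1) → Cos G F) → (W →L[ℝ] ℝ),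
            Bdd b ∧
            (∀ (g : G) (x : Fin (m + 1) → Cos G F),
              b (fun j => g • x j) = (b x).comp (smulCLM hW g⁻¹)) ∧
            ∀ x : Fin (m + 2) → Cos G F,
              c (fun j => inclCos hFF' (x j)) = f x + delta m b x) ∧
      ∀ c : (Fin (m + 2) → Cos G F') → (W →L[ℝ] ℝ),
        Bdd c →
        (∀ (g : G) (x : Fin (m + 2) → Cos G F'),
          c (fun j => g • x j) = (c x).comp (smulCLM hW g⁻¹)) →
        delta (m + 1) c = 0 →
        (∃ b : (Fin (m + 1) → Cos G F) → (W →L[ℝ] ℝ),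
          Bdd b ∧
          (∀ (g : G) (x : Fin (m + 1) → Cos G F),
            b (fun j => g • x j) = (b x).comp (smulCLM hW g⁻¹)) ∧
          ∀ x : Fin (m + 2) → Cos G F,
            c (fun j => inclCos hFF' (x j)) = delta m b x) →
        ∃ b' : (Fin (m + 1) → Cos G F') → (W →L[ℝ] ℝ),
          Bdd b' ∧
          (∀ (g : G) (x : Fin (m + 1) → Cos G F'),
            b' (fun j => g • x j) = (b' x).comp (smulCLM hW g⁻¹)) ∧
          c = delta m b' := by
  classical
  have hμTS := muTS_mean F F' hamen
  have hμT := muT_mean F F' hamen hFF'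
  have hμS := muS_mean F F' hamen hFF'
  have heqTS : ∀ (g : G) (p : Cos G F') (f : Cos G F → ℝ),
      muTS F F' hamen (g • p) f = muTS F F' hamen p (fun a => f (g • a)) :=
    muTS_equivariant F F' hamen
  have heqT : ∀ (g : G) (p : Cos G F') (f : Cos G F' → ℝ),
      muT F F' hamen hFF' (g • p) f = muT F F' hamen hFF' p (fun a => f (g • a)) :=
    muT_equivariant F F' hamen hFF'
  have heqS : ∀ (g : G) (p : Cos G F) (f : Cos G F → ℝ),
      muS F F' hamen hFF' (g • p) f = muS F F' hamen hFF' p (fun a => f (g • a)) :=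
    muS_equivariant F F' hamen hFF'
  obtain ⟨H0, hH0⟩ := hF.1
  set s0 : Cos G F := ⟨⟨H0, hH0⟩, QuotientGroup.mk (1 : G)⟩ with hs0
  refine ⟨⟨?_, ?_⟩, ?_⟩
  · -- degree 0 : surjectivity on cocycles
    intro f hfb hfe hfz
    refine ⟨fun _ => f (fun _ => s0), ⟨‖f (fun _ => s0)‖, fun x => le_rfl⟩, ?_, ?_, ?_⟩
    · intro g x
      show f (fun _ => s0) = (f (fun _ => s0)).comp (smulCLM hW g⁻¹)
      rw [← hfe g (fun _ => s0)]
      exact const_of_cocycle0 f hfz (fun _ => s0) (fun j => g • s0)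
    · funext x
      show ∑ i : Fin 2, ((-1 : ℝ) ^ (i : ℕ)) • f (fun _ => s0) = 0
      rw [Fin.sum_univ_two]
      simp
      exact (congrArg (fun z => (f fun _ => s0) + z) (neg_one_smul ℝ (f fun _ => s0))).trans
        (add_neg_cancel _)
    · intro x
      exact const_of_cocycle0 f hfz (fun _ => s0) x
  · -- degree 0 : injectivity on cocycles
    intro c c' hcb hce hcz hcb' hce' hcz' hagree
    funext x
    calc c x = c (fun _ => inclCos hFF' s0) := const_of_cocycle0 c hcz x _
      _ = c' (fun _ => inclCos hFF' s0) := hagree (fun _ => s0)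
      _ = c' x := const_of_cocycle0 c' hcz' _ x
  · -- degrees ≥ 1
    intro m
    constructor
    · -- surjectivity
      intro f hfb hfe hfz
      refine ⟨AvgC (muTS F F' hamen) hμTS f, AvgC_bdd hμTS hfb, ?_, ?_,
        hcochC (muS F F' hamen hFF') hμS f, hcochC_bdd hμS hfb, ?_, ?_⟩
      · intro g x
        exact AvgC_equivariant hW hμTS heqTS hfb hfe g x
      · rw [AvgC_delta hμTS f hfb, hfz]
        funext p
        exact AvgC_zero hμTS p
      · intro g x
        exact hcochC_equivariant hW hμS heqS hfb hfe g x
      · intro x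
        have hconn : AvgC (muTS F F' hamen) hμTS f (fun j => inclCos hFF' (x j))
            = TavC (muS F F' hamen hFF') hμS 0 f x := by
          ext w
          rw [AvgC_apply hμTS hfb, TavC_apply hμS 0 hfb, Tav_zero, Mint_muS]
        rw [hconn, mainC hμS f hfb x, hfz, hcochC_zero hμS, add_zero]
    · -- injectivity
      intro c hcb hce hcz hexists
      obtain ⟨b, hbb, hbe, hbr⟩ := hexists
      refine ⟨fun x => AvgC (muTS F F' hamen) hμTS b x
        - hcochC (muT F F' hamen hFF') hμT c x, ?_, ?_, ?_⟩
      · obtain ⟨C1, hC1⟩ := AvgC_bdd hμTS hbb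
        obtain ⟨C2, hC2⟩ := hcochC_bdd hμT hcb
        exact ⟨C1 + C2, fun x => (norm_sub_le _ _).trans (add_le_add (hC1 x) (hC2 x))⟩
      · intro g x
        dsimp only
        rw [AvgC_equivariant hW hμTS heqTS hbb hbe g x,
          hcochC_equivariant hW hμT heqT hcb hce g x]
        ext w
        simp only [ContinuousLinearMap.sub_apply, ContinuousLinearMap.comp_apply]
      · funext x
        ext w
        rw [delta_apply_CLM]
        rw [show (fun q => (AvgC (muTS F F' hamen) hμTS b q
              - hcochC (muT F F' hamen hFF') hμT c q) w)
            = fun q => AvgC (muTS F F' hamen) hμTS b q w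
              - hcochC (muT F F' hamen hFF') hμT c q w from funext fun q => rfl]
        rw [delta_sub_scalar]
        have hceq : c x = TavC (muT F F' hamen hFF') hμT 0 c x
            - delta m (hcochC (muT F F' hamen hFF') hμT c) x := by
          have hmain := mainC hμT c hcb x
          rw [hcz, hcochC_zero hμT, add_zero] at hmain
          exact eq_sub_of_add_eq hmain.symm
        have h7 : TavC (muT F F' hamen hFF') hμT 0 c x w
            = delta m (fun q => AvgC (muTS F F' hamen) hμTS b q w) x := by
          rw [TavC_apply hμT 0 hcb, Tav_zero, Mint_muT]
          rw [show (fun y : Fin (m + 2) → Cos G F =>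
                c (fun i => inclCos hFF' (y i)) w)
              = fun y => delta m (fun z => b z w) y from
            funext fun y => by rw [hbr y, delta_apply_CLM]]
          rw [Mint_delta hμTS (fun z => b z w) (hbb.choose * ‖w‖)
            (eval_bound hbb.choose_spec w) x]
          congr 1
          funext q
          rw [AvgC_apply hμTS hbb]
        calc c x w
            = TavC (muT F F' hamen hFF') hμT 0 c x w
              - delta m (hcochC (muT F F' hamen hFF') hμT c) x w := by rw [hceq]; rfl
          _ = delta m (fun q => AvgC (muTS F F' hamen) hμTS b q w) x
              - delta m (fun q => hcochC (muT F F' hamen hFF') hμT c q w) x := by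
              rw [h7, delta_apply_CLM]


end RelBdd
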